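/- Fix 0 ≤ n ≤ N−1 and let (c_0, c_1, …, c_N) be the coefficient list of the twisted-polynomial product (τ + ⟪Θ⟫_{N−n}^{N−1}) ∘ ⋯ ∘ (τ + ⟪Θ⟫_{N−n}^{1}) ∘ (τ + ⟪Θ⟫_{N−n}^{0}). Then in F(t): t^n / ∏_{k=0}^{N−1} (t − η^{q^k}) = (η^{q^{N−1}})^{n} · (∏_{m=0}^{N−1} (θ − η^{q^{N−1−m}})^{−q^m}) · (θ − η)^{W_N} · ∑_{i=0}^{N} c_i · s_i(t). (Via the Anderson-motive definition a · s_0 = Ψ_a s_0 with τ^i s_0 = s_i, this is exactly the statement that the standard rank-one Drinfeld A-module Ψ satisfies Ψ_{T_n} = η^{n/q} · Θ^{γ_N(σ) − W_N} · (τ + ⟪Θ⟫_{N−n}^{N−1}) ∘ ⋯ ∘ (τ + ⟪Θ⟫_{N−n}^{0}), where T_n = t^n/ρ(t).) -/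

import Mathlib

namespace StdDrinfeld

variable {F : Type*} [Field F]

/-- `A_m = ∏_{j<m} (θ-η^{q^j})^{q^{m-1-j}}`. -/
def Apow (q : ℕ) (θ η : F) (m : ℕ) : F :=
  ∏ j ∈ Finset.range m, (θ - η ^ q ^ j) ^ q ^ (m - 1 - j)

/-- `K_m = A_m · (θ-η)^{-W_m} · η^{-(m-l)q^{m-1}}`. -/
def Kc (q l : ℕ) (W : ℕ → ℕ) (θ η : F) (m : ℕ) : F :=
  Apow q θ η m * ((θ - η) ^ W m)⁻¹ * (η ^ ((m - l) * q ^ (m - 1)))⁻¹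

lemma Apow_zero (q : ℕ) (θ η : F) : Apow q θ η 0 = 1 := by simp [Apow]

lemma Apow_succ (q : ℕ) (θ η : F) (m : ℕ) :
    Apow q θ η (m + 1) = (Apow q θ η m) ^ q * (θ - η ^ q ^ m) := by
  rw [Apow, Finset.prod_range_succ]
  congr 1
  · rw [Apow, ← Finset.prod_pow]
    refine Finset.prod_congr rfl fun j hj => ?_
    rw [← pow_mul, ← pow_succ]
    congr 2
    have := Finset.mem_range.mp hj
    omega
  · simp

lemma Apow_ne_zero (q : ℕ) (θ η : F) (hθηj : ∀ j, θ - η ^ q ^ j ≠ 0) (m : ℕ) :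
    Apow q θ η m ≠ 0 :=
  Finset.prod_ne_zero_iff.mpr fun j _ => pow_ne_zero _ (hθηj j)

lemma Kc_ne_zero (q l : ℕ) (W : ℕ → ℕ) (θ η : F) (hη : η ≠ 0)
    (hθηj : ∀ j, θ - η ^ q ^ j ≠ 0) (m : ℕ) : Kc q l W θ η m ≠ 0 := by
  have h0 : θ - η ≠ 0 := by simpa using hθηj 0
  exact mul_ne_zero (mul_ne_zero (Apow_ne_zero q θ η hθηj m)
    (inv_ne_zero (pow_ne_zero _ h0))) (inv_ne_zero (pow_ne_zero _ hη))

lemma Kc_zero (q l : ℕ) (W : ℕ → ℕ) (hW0 : W 0 = 0) (θ η : F) :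
    Kc q l W θ η 0 = 1 := by
  simp [Kc, hW0, Apow_zero]

end StdDrinfeld

namespace StdDrinfeld
section Rec
variable {F : Type*} [Field F] (q l : ℕ) (W : ℕ → ℕ) (θ η : F)

lemma W_cast (hq2 : 2 ≤ q) (hWmul : ∀ i, W i * (q - 1) = q ^ i - 1) (i : ℕ) :
    (W i : ℤ) * ((q : ℤ) - 1) = (q : ℤ) ^ i - 1 := by
  have h := hWmul i
  have h1 : 1 ≤ q ^ i := Nat.one_le_pow _ _ (by omega)
  zify [h1, (by omega : 1 ≤ q)] at h
  exact_mod_cast h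

lemma W_succ (hq2 : 2 ≤ q) (hWmul : ∀ i, W i * (q - 1) = q ^ i - 1) (m : ℕ) :
    W (m + 1) = q * W m + 1 := by
  have h := W_cast q W hq2 hWmul (m + 1)
  have h' := W_cast q W hq2 hWmul m
  have hq : (q : ℤ) - 1 ≠ 0 := by
    have : (2 : ℤ) ≤ (q : ℤ) := by exact_mod_cast hq2
    omega
  have key : (W (m + 1) : ℤ) = (q : ℤ) * (W m : ℤ) + 1 := by
    apply mul_right_cancel₀ hq
    calc (W (m + 1) : ℤ) * ((q : ℤ) - 1) = (q : ℤ) ^ (m + 1) - 1 := h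
      _ = (q : ℤ) * ((q : ℤ) ^ m - 1) + ((q : ℤ) - 1) := by ring
      _ = (q : ℤ) * ((W m : ℤ) * ((q : ℤ) - 1)) + ((q : ℤ) - 1) := by rw [h']
      _ = ((q : ℤ) * (W m : ℤ) + 1) * ((q : ℤ) - 1) := by ring
  exact_mod_cast key

lemma W_q_id (hq2 : 2 ≤ q) (hWmul : ∀ i, W i * (q - 1) = q ^ i - 1) (m : ℕ) :
    q * W m + 1 = W m + q ^ m := by
  have h' := W_cast q W hq2 hWmul m
  have key : (q : ℤ) * (W m : ℤ) + 1 = (W m : ℤ) + (q : ℤ) ^ m := by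
    linear_combination h'
  exact_mod_cast key

variable (hq2 : 2 ≤ q) (hWmul : ∀ i, W i * (q - 1) = q ^ i - 1)
  (hη : η ≠ 0) (hθηj : ∀ j, θ - η ^ q ^ j ≠ 0)

include hq2 hWmul hη hθηj in
lemma Kc_rec_lt (m : ℕ) (hm : m + 1 ≤ l) :
    Kc q l W θ η (m + 1) * (θ - η) = (Kc q l W θ η m) ^ q * (θ - η ^ q ^ m) := by
  have h0 : θ - η ≠ 0 := by simpa using hθηj 0
  have hA := Apow_ne_zero q θ η hθηj m
  have e1 : m + 1 - l = 0 := by omega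
  have e2 : m - l = 0 := by omega
  rw [Kc, Kc, e1, e2, Apow_succ, W_succ q W hq2 hWmul m]
  simp only [zero_mul, pow_zero, inv_one, mul_one]
  simp only [mul_pow, inv_pow, ← pow_mul]
  field_simp
  ring

include hq2 hWmul hη hθηj in
lemma Kc_rec_ge (m : ℕ) (hl : 1 ≤ l) (hm : l ≤ m) :
    Kc q l W θ η (m + 1) * ((θ - η) * η ^ q ^ m)
      = (Kc q l W θ η m) ^ q * (θ - η ^ q ^ m) := by
  have h0 : θ - η ≠ 0 := by simpa using hθηj 0
  have hA := Apow_ne_zero q θ η hθηj m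
  have e1 : m + 1 - l = (m - l) + 1 := by omega
  have e2 : m - 1 + 1 = m := by omega
  have e3 : q ^ m = q ^ (m - 1) * q := by rw [← pow_succ, e2]
  rw [Kc, Kc, Apow_succ, W_succ q W hq2 hWmul m]
  simp only [Nat.add_sub_cancel, e1, e3]
  simp only [mul_pow, inv_pow, ← pow_mul]
  field_simp
  ring

end Rec
end StdDrinfeld

namespace StdDrinfeld
section Th
variable {F : Type*} [Field F] (q l : ℕ) (W : ℕ → ℕ) (θ η : F)
variable (hq2 : 2 ≤ q) (hWmul : ∀ i, W i * (q - 1) = q ^ i - 1)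
  (hη : η ≠ 0) (hθηj : ∀ j, θ - η ^ q ^ j ≠ 0)

set_option linter.unusedSectionVars false

include hq2 hWmul hη hθηj in
lemma Th_lt_id (m : ℕ) (hm : m < l) :
    (Apow q θ η m ^ (q - 1) * ((θ - η) ^ q ^ m)⁻¹)
      * (Kc q l W θ η m * (θ - η)) = Kc q l W θ η m ^ q := by
  have h0 : θ - η ≠ 0 := by simpa using hθηj 0
  have hA := Apow_ne_zero q θ η hθηj m
  have e2 : m - l = 0 := by omega
  have key : (θ - η) ^ q ^ m * (θ - η) ^ W m = ((θ - η) ^ W m) ^ q * (θ - η) := by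
    rw [← pow_add, ← pow_mul, ← pow_succ]
    congr 1
    have h := W_q_id q W hq2 hWmul m
    linarith
  have hA1 : Apow q θ η m ^ (q - 1) * Apow q θ η m = Apow q θ η m ^ q := by
    rw [← pow_succ]
    congr 1
    omega
  rw [Kc, e2]
  simp only [Nat.zero_mul, pow_zero, inv_one, mul_one]
  field_simp
  rw [div_pow]
  field_simp
  rw [key, ← hA1]
  ring

include hq2 hWmul hη hθηj in
lemma Th_ge_id (m : ℕ) (hl : 1 ≤ l) (hm : l ≤ m) :
    (θ * (η ^ (q ^ (m - 1) * (q - 1) * (m - l) + q ^ m))⁻¹ * Apow q θ η m ^ (q - 1)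
        * ((θ - η) ^ q ^ m)⁻¹)
      * (Kc q l W θ η m * (θ - η) * η ^ q ^ m) = θ * Kc q l W θ η m ^ q := by
  have h0 : θ - η ≠ 0 := by simpa using hθηj 0
  have hA := Apow_ne_zero q θ η hθηj m
  have key : (θ - η) ^ q ^ m * (θ - η) ^ W m = ((θ - η) ^ W m) ^ q * (θ - η) := by
    rw [← pow_add, ← pow_mul, ← pow_succ]
    congr 1
    have h := W_q_id q W hq2 hWmul m
    linarith
  have hA1 : Apow q θ η m ^ (q - 1) * Apow q θ η m = Apow q θ η m ^ q := by
    rw [← pow_succ]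
    congr 1
    omega
  have eη : η ^ q ^ m * (η ^ ((m - l) * q ^ (m - 1))) ^ q
      = η ^ (q ^ (m - 1) * (q - 1) * (m - l) + q ^ m) * η ^ ((m - l) * q ^ (m - 1)) := by
    rw [← pow_mul, ← pow_add, ← pow_add]
    congr 1
    have e : q - 1 + 1 = q := by omega
    calc q ^ m + (m - l) * q ^ (m - 1) * q
        = q ^ m + (m - l) * q ^ (m - 1) * ((q - 1) + 1) := by rw [e]
      _ = q ^ (m - 1) * (q - 1) * (m - l) + q ^ m + (m - l) * q ^ (m - 1) := by ring
  rw [Kc]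
  field_simp
  rw [div_pow]
  field_simp
  rw [← hA1]
  linear_combination (θ * Apow q θ η m ^ (q - 1) * Apow q θ η m * (θ - η)
        * ((θ - η) ^ W m) ^ q) * eη
    - (θ * Apow q θ η m ^ (q - 1) * Apow q θ η m
        * η ^ (q ^ (m - 1) * (q - 1) * (m - l) + q ^ m)
        * η ^ ((m - l) * q ^ (m - 1))) * key
end Th
end StdDrinfeld




set_option maxHeartbeats 1600000 in
/-- Explicit factorization of the standard rank-one Drinfeld
module: with `(c_0,…,c_N)` the coefficient list of
`(τ + ⟪Θ⟫_{N-n}^{N-1}) ∘ ⋯ ∘ (τ + ⟪Θ⟫_{N-n}^{0})`, one has in `F(t)`: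
`t^n/∏_{k<N}(t-η^{q^k}) = (η^{q^{N-1}})^n · (∏_{m<N}(θ-η^{q^{N-1-m}})^{-q^m}) · (θ-η)^{W_N}
· ∑_{i≤N} c_i·s_i(t)`. -/
theorem standard_drinfeld_module_factorization
    (p q N : ℕ) (hp : Nat.Prime p) (hq : ∃ e : ℕ, 0 < e ∧ q = p ^ e)
    (hN : 2 ≤ N)
    (F : Type*) [Field F] [CharP F p]
    (θ η : F) (hη : η ≠ 0) (hper : η ^ q ^ N = η)
    (hθη : ∀ a b : ℕ, θ ^ q ^ a ≠ η ^ q ^ b)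
    (hθ : ∀ m : ℕ, 1 ≤ m → θ ^ q ^ m ≠ θ)
    (W : ℕ → ℕ) (hW : ∀ i, W i = (q ^ i - 1) / (q - 1))
    -- G_i = ∏_{m<i} (θ - η^{q^{i-1-m}})^{(q-1)·q^m}
    (G : ℕ → F)
    (hG : ∀ i : ℕ, G i = ∏ m ∈ Finset.range i,
      (θ - η ^ q ^ (i - 1 - m)) ^ ((q - 1) * q ^ m))
    -- ⟪Θ⟫_l^i
    (Th : ℕ → ℕ → F)
    (hTh_lt : ∀ l i : ℕ, i < l → Th l i = G i * ((θ - η) ^ q ^ i)⁻¹)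
    (hTh_ge : ∀ l i : ℕ, l ≤ i → Th l i
      = θ * (η ^ (q ^ (i - 1) * (q - 1) * (i - l) + q ^ i))⁻¹
        * G i * ((θ - η) ^ q ^ i)⁻¹)
    (n : ℕ) (hn : n ≤ N - 1)
    -- coefficient lists of the iterated twisted-polynomial products
    -- (τ + a_{m-1}) ∘ ⋯ ∘ (τ + a_0) with a_i = ⟪Θ⟫_{N-n}^i
    (c : ℕ → ℕ → F)
    (hc0 : ∀ i : ℕ, c 0 i = if i = 0 then 1 else 0)
    (hcz : ∀ m : ℕ, c (m + 1) 0 = Th (N - n) m * c m 0)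
    (hcs : ∀ m i : ℕ, c (m + 1) (i + 1) = (c m i) ^ q + Th (N - n) m * c m (i + 1))
    -- the twisted shtuka functions f^{(k)} and products s_i in F(t)
    (f : ℕ → RatFunc F)
    (hf : ∀ k : ℕ, f k = (RatFunc.X - RatFunc.C (η ^ q ^ k))⁻¹
        - RatFunc.C ((θ ^ q ^ k - η ^ q ^ k)⁻¹))
    (s : ℕ → RatFunc F)
    (hs : ∀ i : ℕ, s i = ∏ k ∈ Finset.range i, f k) :
    RatFunc.X ^ n / (∏ k ∈ Finset.range N, (RatFunc.X - RatFunc.C (η ^ q ^ k)))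
      = RatFunc.C ((η ^ q ^ (N - 1)) ^ n
            * (∏ m ∈ Finset.range N, ((θ - η ^ q ^ (N - 1 - m)) ^ q ^ m)⁻¹)
            * (θ - η) ^ W N)
        * ∑ i ∈ Finset.range (N + 1), RatFunc.C (c N i) * s i := by
  classical
  haveI : Fact p.Prime := ⟨hp⟩
  obtain ⟨e, he, hqe⟩ := hq
  have hq2 : 2 ≤ q := by
    rw [hqe]; exact Nat.one_lt_pow (by omega) hp.one_lt
  have hq0 : q ≠ 0 := by omega
  -- Frobenius additivity for q-th power maps
  have habs : ∀ (x y : F) (r : ℕ), (x + y) ^ q ^ r = x ^ q ^ r + y ^ q ^ r := by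
    intro x y r
    rw [hqe, ← pow_mul]
    exact add_pow_char_pow x y p (e * r)
  have hsubs : ∀ (x y : F) (r : ℕ), (x - y) ^ q ^ r = x ^ q ^ r - y ^ q ^ r := by
    intro x y r
    rw [hqe, ← pow_mul]
    exact sub_pow_char_pow x y (e * r)
  set l := N - n with hl_def
  have hl1 : 1 ≤ l := by omega
  have hlN : l ≤ N := by omega
  have hNl : N - l = n := by omega
  -- nonvanishing
  have hθηab : ∀ a b : ℕ, θ ^ q ^ a - η ^ q ^ b ≠ 0 := fun a b => sub_ne_zero_of_ne (hθη a b)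
  have hθηj : ∀ j, θ - η ^ q ^ j ≠ 0 := by
    intro j
    have := hθηab 0 j
    simpa using this
  have h0 : θ - η ≠ 0 := by simpa using hθηj 0
  have hWmul : ∀ i, W i * (q - 1) = q ^ i - 1 := by
    intro i
    rw [hW i]
    exact Nat.div_mul_cancel (by simpa using Nat.sub_dvd_pow_sub_pow q 1 i)
  have hW0 : W 0 = 0 := by
    have h := hWmul 0
    simp only [pow_zero, Nat.sub_self] at h
    rcases Nat.mul_eq_zero.mp h with h' | h'
    · exact h'
    · omega
  have hKne : ∀ m, StdDrinfeld.Kc q l W θ η m ≠ 0 :=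
    StdDrinfeld.Kc_ne_zero q l W θ η hη hθηj
  have hGA : ∀ m, G m = StdDrinfeld.Apow q θ η m ^ (q - 1) := by
    intro m
    have h1 : StdDrinfeld.Apow q θ η m ^ (q - 1)
        = ∏ j ∈ Finset.range m, (θ - η ^ q ^ j) ^ (q ^ (m - 1 - j) * (q - 1)) := by
      rw [StdDrinfeld.Apow, ← Finset.prod_pow]
      exact Finset.prod_congr rfl fun j _ => (pow_mul _ _ _).symm
    rw [h1, hG m, ← Finset.prod_range_reflect]
    refine Finset.prod_congr rfl fun j hj => ?_
    have hj' := Finset.mem_range.mp hj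
    rw [show m - 1 - (m - 1 - j) = j from by omega,
      mul_comm (q - 1) (q ^ (m - 1 - j))]
  -- vanishing of high coefficients
  have hczero : ∀ m i : ℕ, m < i → c m i = 0 := by
    intro m
    induction m with
    | zero =>
      intro i hi
      rw [hc0 i, if_neg (by omega)]
    | succ m ih =>
      intro i hi
      match i, hi with
      | j + 1, hi =>
        rw [hcs m j, ih j (by omega), ih (j + 1) (by omega), mul_zero,
          zero_pow hq0, add_zero]
  -- RatFunc basics
  have hXC : ∀ a : F, RatFunc.X - RatFunc.C a ≠ 0 := by
    intro a hXa
    have h1 : (RatFunc.X : RatFunc F) = RatFunc.C a := sub_eq_zero.mp hXa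
    have h2 := congrArg RatFunc.num h1
    rw [RatFunc.num_X, RatFunc.num_C] at h2
    exact Polynomial.X_ne_C a h2
  have hCinj : Function.Injective (RatFunc.C : F →+* RatFunc F) :=
    RingHom.injective _
  have hCne : ∀ {x : F}, x ≠ 0 → (RatFunc.C x : RatFunc F) ≠ 0 := by
    intro x hx hc
    exact hx (hCinj (by simpa using hc))
  have hPne : ∀ r m : ℕ,
      (∏ k ∈ Finset.range m, (RatFunc.X - RatFunc.C (η ^ q ^ (k + r)))) ≠ 0 :=
    fun r m => Finset.prod_ne_zero_iff.mpr fun k _ => hXC _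
  have hqq : ∀ (x : F) (r : ℕ), (x ^ q) ^ q ^ r = x ^ q ^ (r + 1) := by
    intro x r
    rw [← pow_mul, pow_succ']
  -- the key induction
  have hmain : ∀ m r : ℕ,
      (∑ i ∈ Finset.range (m + 1),
        RatFunc.C ((c m i) ^ q ^ r) * ∏ k ∈ Finset.range i, f (k + r))
      = RatFunc.C ((StdDrinfeld.Kc q l W θ η m) ^ q ^ r) * RatFunc.X ^ (m - l)
        * (∏ k ∈ Finset.range m, (RatFunc.X - RatFunc.C (η ^ q ^ (k + r))))⁻¹ := by
    intro m
    induction m with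
    | zero =>
      intro r
      simp [hc0, StdDrinfeld.Kc_zero q l W hW0 θ η]
    | succ m IH =>
      intro r
      have hThr : ∀ i, c (m + 1) (i + 1) = c m i ^ q + Th l m * c m (i + 1) := hcs m
      -- decompose the sum
      have step1 : (∑ i ∈ Finset.range (m + 1 + 1),
            RatFunc.C ((c (m + 1) i) ^ q ^ r) * ∏ k ∈ Finset.range i, f (k + r))
          = f r * (∑ i ∈ Finset.range (m + 1),
              RatFunc.C ((c m i) ^ q ^ (r + 1)) * ∏ k ∈ Finset.range i, f (k + (r + 1)))
            + RatFunc.C ((Th l m) ^ q ^ r) * (∑ i ∈ Finset.range (m + 1),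
              RatFunc.C ((c m i) ^ q ^ r) * ∏ k ∈ Finset.range i, f (k + r)) := by
        rw [Finset.sum_range_succ']
        have hterm : ∀ i, RatFunc.C ((c (m + 1) (i + 1)) ^ q ^ r)
              * ∏ k ∈ Finset.range (i + 1), f (k + r)
            = RatFunc.C ((c m i) ^ q ^ (r + 1))
                * (f r * ∏ k ∈ Finset.range i, f (k + (r + 1)))
              + RatFunc.C ((Th l m) ^ q ^ r) * (RatFunc.C ((c m (i + 1)) ^ q ^ r)
                * ∏ k ∈ Finset.range (i + 1), f (k + r)) := by
          intro i
          have hprod : (∏ k ∈ Finset.range (i + 1), f (k + r))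
              = f r * ∏ k ∈ Finset.range i, f (k + (r + 1)) := by
            rw [Finset.prod_range_succ', zero_add, mul_comm]
            congr 1
            refine Finset.prod_congr rfl fun k _ => ?_
            rw [show k + 1 + r = k + (r + 1) from by omega]
          rw [hThr i, habs, hqq, mul_pow, map_add, map_mul]
          rw [hprod]
          ring
        have hsum1 : (∑ i ∈ Finset.range (m + 1),
              RatFunc.C ((c (m + 1) (i + 1)) ^ q ^ r) * ∏ k ∈ Finset.range (i + 1), f (k + r))
            = (∑ i ∈ Finset.range (m + 1), RatFunc.C ((c m i) ^ q ^ (r + 1))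
                * (f r * ∏ k ∈ Finset.range i, f (k + (r + 1))))
              + ∑ i ∈ Finset.range (m + 1), RatFunc.C ((Th l m) ^ q ^ r)
                * (RatFunc.C ((c m (i + 1)) ^ q ^ r)
                  * ∏ k ∈ Finset.range (i + 1), f (k + r)) := by
          rw [← Finset.sum_add_distrib]
          exact Finset.sum_congr rfl fun i _ => hterm i
        rw [hsum1, add_assoc]
        congr 1
        · rw [Finset.mul_sum]
          exact Finset.sum_congr rfl fun i _ => by ring
        · -- the a-part plus the 0-term reassembles
          rw [hcz m, mul_pow, map_mul, Finset.prod_range_zero, mul_one]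
          rw [← Finset.mul_sum, ← mul_add]
          congr 1
          have h00 : RatFunc.C ((c m 0) ^ q ^ r)
              = RatFunc.C ((c m 0) ^ q ^ r) * ∏ k ∈ Finset.range 0, f (k + r) := by
            rw [Finset.prod_range_zero, mul_one]
          rw [h00, ← Finset.sum_range_succ' (fun i => RatFunc.C ((c m i) ^ q ^ r)
              * ∏ k ∈ Finset.range i, f (k + r)) (m + 1), Finset.sum_range_succ,
            hczero m (m + 1) (by omega),
            zero_pow (pow_ne_zero r hq0), map_zero, zero_mul, add_zero]
      rw [step1, IH r, IH (r + 1)]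
      -- notation
      have hd2s : RatFunc.C (θ ^ q ^ r) - RatFunc.C (η ^ q ^ r) ≠ 0 := by
        rw [← map_sub]; exact hCne (hθηab r r)
      have hfr : f r = (RatFunc.C (θ ^ q ^ r) - RatFunc.X)
          * ((RatFunc.X - RatFunc.C (η ^ q ^ r))⁻¹
              * (RatFunc.C (θ ^ q ^ r) - RatFunc.C (η ^ q ^ r))⁻¹) := by
        have hd1 := hXC (η ^ q ^ r)
        rw [hf r, map_inv₀, map_sub, ← mul_inv]
        rw [eq_mul_inv_iff_mul_eq₀ (mul_ne_zero hd1 hd2s)]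
        rw [sub_mul, ← mul_assoc, inv_mul_cancel₀ hd1, one_mul,
          mul_comm (RatFunc.X - RatFunc.C (η ^ q ^ r))
            (RatFunc.C (θ ^ q ^ r) - RatFunc.C (η ^ q ^ r)),
          ← mul_assoc, inv_mul_cancel₀ hd2s, one_mul]
        ring
      have hP1 : (∏ k ∈ Finset.range (m + 1), (RatFunc.X - RatFunc.C (η ^ q ^ (k + r))))
          = (∏ k ∈ Finset.range m, (RatFunc.X - RatFunc.C (η ^ q ^ (k + r))))
            * (RatFunc.X - RatFunc.C (η ^ q ^ (m + r))) := Finset.prod_range_succ _ _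
      have hP2 : (∏ k ∈ Finset.range (m + 1), (RatFunc.X - RatFunc.C (η ^ q ^ (k + r))))
          = (RatFunc.X - RatFunc.C (η ^ q ^ r))
            * ∏ k ∈ Finset.range m, (RatFunc.X - RatFunc.C (η ^ q ^ (k + (r + 1)))) := by
        rw [Finset.prod_range_succ', zero_add, mul_comm]
        congr 1
        refine Finset.prod_congr rfl fun k _ => ?_
        rw [show k + 1 + r = k + (r + 1) from by omega]
      have hPinv : (∏ k ∈ Finset.range m, (RatFunc.X - RatFunc.C (η ^ q ^ (k + r))))⁻¹
          = (RatFunc.X - RatFunc.C (η ^ q ^ (m + r)))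
            * (∏ k ∈ Finset.range (m + 1), (RatFunc.X - RatFunc.C (η ^ q ^ (k + r))))⁻¹ := by
        rw [hP1, mul_inv, mul_comm
          ((∏ k ∈ Finset.range m, (RatFunc.X - RatFunc.C (η ^ q ^ (k + r))))⁻¹)
          ((RatFunc.X - RatFunc.C (η ^ q ^ (m + r)))⁻¹), ← mul_assoc,
          mul_inv_cancel₀ (hXC _), one_mul]
      have hQinv : (∏ k ∈ Finset.range m, (RatFunc.X - RatFunc.C (η ^ q ^ (k + (r + 1)))))⁻¹
          = (RatFunc.X - RatFunc.C (η ^ q ^ r))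
            * (∏ k ∈ Finset.range (m + 1), (RatFunc.X - RatFunc.C (η ^ q ^ (k + r))))⁻¹ := by
        rw [hP2, mul_inv, ← mul_assoc, mul_inv_cancel₀ (hXC _), one_mul]
      have hηm : (η ^ q ^ m) ^ q ^ r = η ^ q ^ (m + r) := by
        rw [← pow_mul, ← pow_add]
      by_cases hml : m < l
      · -- case m < l
        have hTid := StdDrinfeld.Th_lt_id q l W θ η hq2 hWmul hη hθηj m hml
        have hTid' : Th l m * (StdDrinfeld.Kc q l W θ η m * (θ - η))
            = StdDrinfeld.Kc q l W θ η m ^ q := by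
          rw [hTh_lt l m hml, hGA m]; exact hTid
        have haF : Th l m ^ q ^ r
            * (StdDrinfeld.Kc q l W θ η m ^ q ^ r * (θ ^ q ^ r - η ^ q ^ r))
            = StdDrinfeld.Kc q l W θ η m ^ q ^ (r + 1) := by
          rw [← hsubs θ η r, ← hqq, ← mul_pow, ← mul_pow, hTid']
        have hRF : StdDrinfeld.Kc q l W θ η (m + 1) ^ q ^ r * (θ ^ q ^ r - η ^ q ^ r)
            = StdDrinfeld.Kc q l W θ η m ^ q ^ (r + 1)
              * (θ ^ q ^ r - η ^ q ^ (m + r)) := by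
          have hR := StdDrinfeld.Kc_rec_lt q l W θ η hq2 hWmul hη hθηj m hml
          rw [← hsubs θ η r, ← hqq, ← hηm, ← hsubs θ (η ^ q ^ m) r, ← mul_pow,
            ← mul_pow, hR]
        have hsolA : Th l m ^ q ^ r
            = StdDrinfeld.Kc q l W θ η m ^ q ^ (r + 1)
              * (StdDrinfeld.Kc q l W θ η m ^ q ^ r * (θ ^ q ^ r - η ^ q ^ r))⁻¹ := by
          rw [eq_mul_inv_iff_mul_eq₀ (mul_ne_zero (pow_ne_zero _ (hKne m)) (hθηab r r))]
          exact haF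
        have hsolK : StdDrinfeld.Kc q l W θ η (m + 1) ^ q ^ r
            = StdDrinfeld.Kc q l W θ η m ^ q ^ (r + 1) * (θ ^ q ^ r - η ^ q ^ (m + r))
              * ((θ ^ q ^ r - η ^ q ^ r))⁻¹ := by
          rw [eq_mul_inv_iff_mul_eq₀ (hθηab r r)]
          exact hRF
        have hexp1 : m + 1 - l = m - l := by omega
        rw [hexp1, hfr, hsolA, hsolK, hPinv, hQinv]
        have hd1 := hXC (η ^ q ^ r)
        have hd1s : RatFunc.X - RatFunc.C η ^ q ^ r ≠ 0 := by
          rw [← map_pow]; exact hd1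
        have hd2ss : RatFunc.C θ ^ q ^ r - RatFunc.C η ^ q ^ r ≠ 0 := by
          rw [← map_pow, ← map_pow]; exact hd2s
        have hd3 := hPne r (m + 1)
        have hd3s := hd3
        simp only [map_pow] at hd3s
        have hd4 : (StdDrinfeld.Kc q l W θ η m ^ q ^ r : F) ≠ 0 :=
          pow_ne_zero _ (hKne m)
        have hd4' := hCne hd4
        have hd4s := hd4'
        simp only [map_pow] at hd4s
        simp only [map_mul, map_inv₀, map_sub, map_pow, mul_inv]
        field_simp
        ring
      · -- case l ≤ m
        have hml' : l ≤ m := by omega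
        have hTid := StdDrinfeld.Th_ge_id q l W θ η hq2 hWmul hη hθηj m hl1 hml'
        have hTid' : Th l m * (StdDrinfeld.Kc q l W θ η m * (θ - η) * η ^ q ^ m)
            = θ * StdDrinfeld.Kc q l W θ η m ^ q := by
          rw [hTh_ge l m hml', hGA m]; exact hTid
        have haF : Th l m ^ q ^ r
            * (StdDrinfeld.Kc q l W θ η m ^ q ^ r * (θ ^ q ^ r - η ^ q ^ r)
                * η ^ q ^ (m + r))
            = θ ^ q ^ r * StdDrinfeld.Kc q l W θ η m ^ q ^ (r + 1) := by
          rw [← hsubs θ η r, ← hqq, ← hηm, ← mul_pow, ← mul_pow, ← mul_pow, hTid',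
            mul_pow]
        have hRF : StdDrinfeld.Kc q l W θ η (m + 1) ^ q ^ r
              * ((θ ^ q ^ r - η ^ q ^ r) * η ^ q ^ (m + r))
            = StdDrinfeld.Kc q l W θ η m ^ q ^ (r + 1)
              * (θ ^ q ^ r - η ^ q ^ (m + r)) := by
          have hR := StdDrinfeld.Kc_rec_ge q l W θ η hq2 hWmul hη hθηj m hl1 hml'
          rw [← hsubs θ η r, ← hqq, ← hηm, ← hsubs θ (η ^ q ^ m) r, ← mul_pow,
            ← mul_pow, ← mul_pow, hR]
        have hηmne : (η ^ q ^ (m + r) : F) ≠ 0 := pow_ne_zero _ hη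
        have hsolA : Th l m ^ q ^ r
            = θ ^ q ^ r * StdDrinfeld.Kc q l W θ η m ^ q ^ (r + 1)
              * (StdDrinfeld.Kc q l W θ η m ^ q ^ r * (θ ^ q ^ r - η ^ q ^ r)
                * η ^ q ^ (m + r))⁻¹ := by
          rw [eq_mul_inv_iff_mul_eq₀ (mul_ne_zero
            (mul_ne_zero (pow_ne_zero _ (hKne m)) (hθηab r r)) hηmne)]
          exact haF
        have hsolK : StdDrinfeld.Kc q l W θ η (m + 1) ^ q ^ r
            = StdDrinfeld.Kc q l W θ η m ^ q ^ (r + 1) * (θ ^ q ^ r - η ^ q ^ (m + r))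
              * ((θ ^ q ^ r - η ^ q ^ r) * η ^ q ^ (m + r))⁻¹ := by
          rw [eq_mul_inv_iff_mul_eq₀ (mul_ne_zero (hθηab r r) hηmne)]
          exact hRF
        have hexp2 : m + 1 - l = (m - l) + 1 := by omega
        rw [hexp2, pow_succ, hfr, hsolA, hsolK, hPinv, hQinv]
        have hd1 := hXC (η ^ q ^ r)
        have hd1s : RatFunc.X - RatFunc.C η ^ q ^ r ≠ 0 := by
          rw [← map_pow]; exact hd1
        have hd2ss : RatFunc.C θ ^ q ^ r - RatFunc.C η ^ q ^ r ≠ 0 := by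
          rw [← map_pow, ← map_pow]; exact hd2s
        have hd3 := hPne r (m + 1)
        have hd3s := hd3
        simp only [map_pow] at hd3s
        have hd4 : (StdDrinfeld.Kc q l W θ η m ^ q ^ r : F) ≠ 0 :=
          pow_ne_zero _ (hKne m)
        have hd4' := hCne hd4
        have hd4s := hd4'
        simp only [map_pow] at hd4s
        have hd5 := hCne hηmne
        have hd5s := hd5
        simp only [map_pow] at hd5s
        simp only [map_mul, map_inv₀, map_sub, map_pow, mul_inv]
        have hd4ss : (RatFunc.C (StdDrinfeld.Kc q l W θ η m) ^ q ^ r : RatFunc F) ≠ 0 :=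
          pow_ne_zero _ (hCne (hKne m))
        have hηm2 : (RatFunc.C η ^ q ^ (m + r) : RatFunc F) ≠ 0 :=
          pow_ne_zero _ (hCne hη)
        have hDEN : (((RatFunc.X - RatFunc.C η ^ q ^ r)
              * (RatFunc.C θ ^ q ^ r - RatFunc.C η ^ q ^ r)
              * ∏ x ∈ Finset.range (m + 1), (RatFunc.X - RatFunc.C η ^ q ^ (x + r)))
            * (RatFunc.C (StdDrinfeld.Kc q l W θ η m) ^ q ^ r
              * (RatFunc.C θ ^ q ^ r - RatFunc.C η ^ q ^ r)
              * RatFunc.C η ^ q ^ (m + r)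
              * ∏ x ∈ Finset.range (m + 1), (RatFunc.X - RatFunc.C η ^ q ^ (x + r)))
            : RatFunc F) ≠ 0 := by
          exact mul_ne_zero (mul_ne_zero (mul_ne_zero hd1s hd2ss) hd3s)
            (mul_ne_zero (mul_ne_zero (mul_ne_zero hd4ss hd2ss) hηm2) hd3s)
        field_simp
        ring
  -- final assembly
  have hAN : (∏ m ∈ Finset.range N, (θ - η ^ q ^ (N - 1 - m)) ^ q ^ m)
      = StdDrinfeld.Apow q θ η N := by
    rw [StdDrinfeld.Apow, ← Finset.prod_range_reflect]
    refine Finset.prod_congr rfl fun j hj => ?_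
    have hj' := Finset.mem_range.mp hj
    rw [show N - 1 - (N - 1 - j) = j from by omega]
  have hKN := hmain N 0
  have hsum : (∑ i ∈ Finset.range (N + 1), RatFunc.C (c N i) * s i)
      = RatFunc.C (StdDrinfeld.Kc q l W θ η N) * RatFunc.X ^ n
        * (∏ k ∈ Finset.range N, (RatFunc.X - RatFunc.C (η ^ q ^ k)))⁻¹ := by
    have e1 : ∀ i : ℕ, RatFunc.C (c N i) * s i
        = RatFunc.C ((c N i) ^ q ^ 0) * ∏ k ∈ Finset.range i, f (k + 0) := by
      intro i
      rw [hs i, pow_zero, pow_one]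
      simp
    rw [Finset.sum_congr rfl fun i _ => e1 i, hKN, pow_zero, pow_one, hNl]
    simp
  rw [hsum]
  rw [← mul_assoc, ← mul_assoc, ← map_mul]
  have hconst : ((η ^ q ^ (N - 1)) ^ n
        * (∏ m ∈ Finset.range N, ((θ - η ^ q ^ (N - 1 - m)) ^ q ^ m)⁻¹)
        * (θ - η) ^ W N) * StdDrinfeld.Kc q l W θ η N = 1 := by
    rw [Finset.prod_inv_distrib, hAN, StdDrinfeld.Kc, hNl]
    have hApne := StdDrinfeld.Apow_ne_zero q θ η hθηj N
    have he : (η ^ q ^ (N - 1)) ^ n = η ^ (n * q ^ (N - 1)) := by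
      rw [← pow_mul, mul_comm]
    rw [he]
    field_simp
  rw [hconst, map_one, one_mul, div_eq_mul_inv]
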